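/- Let X be a finite non-empty set with an imprecise probability tree (Q_s)_{s∈X*}, let M be a supermartingale and s ∈ X* a situation. Then M(s) ≥ inf_{ω∈Γ(s)} limsup_{n→∞} M(ω^n) ≥ inf_{ω∈Γ(s)} liminf_{n→∞} M(ω^n). -/
import Mathlib


open Filter Topology

/-- A function to the extended reals is bounded below by some real number. -/
def BddBelowF {Y : Type*} (f : Y → EReal) : Prop :=
  ∃ M : ℝ, ∀ y, (M : EReal) ≤ f y

/-- An upper expectation on the bounded-below extended-real functions on `Y`:
axioms E1 (constants), E2 (subadditivity), E3 (positive/`+∞` homogeneity on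
non-negative functions) and E4 (monotonicity). -/
structure IsUpperExpectation {Y : Type*} (E : (Y → EReal) → EReal) : Prop where
  const : ∀ c : ℝ, E (fun _ => (c : EReal)) = (c : EReal)
  subadd : ∀ f g : Y → EReal, BddBelowF f → BddBelowF g →
    E (fun y => f y + g y) ≤ E f + E g
  homog : ∀ lam : EReal, 0 < lam → ∀ f : Y → EReal, BddBelowF f → (∀ y, 0 ≤ f y) →
    E (fun y => lam * f y) = lam * E f
  mono : ∀ f g : Y → EReal, BddBelowF f → BddBelowF g → (∀ y, f y ≤ g y) → E f ≤ E g

/-- The initial segment `ω^n = (ω_1, …, ω_n)` of a path `ω ∈ X^ℕ`. -/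
def seg {X : Type*} (ω : ℕ → X) (n : ℕ) : List X :=
  List.ofFn (fun i : Fin n => ω i)

/-- The cylinder event `Γ(s)` of all paths going through the situation `s`. -/
def cyl {X : Type*} (s : List X) : Set (ℕ → X) :=
  {ω | seg ω s.length = s}

/-- A global variable is `n`-measurable if it only depends on the first `n` states. -/
def NMeas {X α : Type*} (n : ℕ) (f : (ℕ → X) → α) : Prop :=
  ∀ ω ω' : ℕ → X, seg ω n = seg ω' n → f ω = f ω'

/-- A supermartingale for an imprecise probability tree `Q`: a bounded-below
extended-real process `M` on situations such that `Q_s(M(s·)) ≤ M(s)` everywhere. -/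
def IsSupermartingale {X : Type*} (Q : List X → (X → EReal) → EReal)
    (M : List X → EReal) : Prop :=
  (∃ B : ℝ, ∀ s, (B : EReal) ≤ M s) ∧ ∀ s, Q s (fun x => M (s ++ [x])) ≤ M s

/-- The game-theoretic upper expectation `Ē_V(f | s)`. -/
noncomputable def gUE {X : Type*} (Q : List X → (X → EReal) → EReal)
    (f : (ℕ → X) → EReal) (s : List X) : EReal :=
  sInf { y | ∃ M : List X → EReal, IsSupermartingale Q M ∧
    (∀ ω ∈ cyl s, f ω ≤ Filter.liminf (fun n => M (seg ω n)) Filter.atTop) ∧ M s = y }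

/-- Lemma 7: a supermartingale dominates the infimum over the paths through `s`
of its limsup, which in turn dominates the infimum of its liminf. -/
theorem stmt8 {X : Type*} [Fintype X] [Nonempty X]
    (Q : List X → (X → EReal) → EReal) (hQ : ∀ s, IsUpperExpectation (Q s))
    (M : List X → EReal) (hM : IsSupermartingale Q M) (s : List X) :
    (⨅ ω ∈ cyl s, Filter.limsup (fun n => M (seg ω n)) atTop) ≤ M s ∧
    (⨅ ω ∈ cyl s, Filter.liminf (fun n => M (seg ω n)) atTop) ≤
      ⨅ ω ∈ cyl s, Filter.limsup (fun n => M (seg ω n)) atTop := by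
  obtain ⟨⟨B, hB⟩, hsup⟩ := hM
  constructor
  · -- step : from any situation we can move to a child without increasing M
    have hstep : ∀ u : List X, ∃ x : X, M (u ++ [x]) ≤ M u := by
      intro u
      obtain ⟨x0, hx0⟩ := Finite.exists_min (fun x : X => M (u ++ [x]))
      refine ⟨x0, le_trans ?_ (hsup u)⟩
      rw [← EReal.ge_of_forall_gt_iff_ge]
      intro z hz
      have hmono := (hQ u).mono (fun _ => (z : EReal)) (fun x => M (u ++ [x]))
        ⟨z, fun _ => le_rfl⟩ ⟨B, fun x => hB _⟩
        (fun x => le_trans hz.le (hx0 x))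
      simpa [(hQ u).const z] using hmono
    choose g hg using hstep
    -- the chain of situations obtained by iterating g from s
    set t : ℕ → List X := fun k => Nat.rec s (fun _ u => u ++ [g u]) k with ht
    have htsucc : ∀ k, t (k + 1) = t k ++ [g (t k)] := fun k => rfl
    have hlen : ∀ k, (t k).length = s.length + k := by
      intro k
      induction k with
      | zero => rfl
      | succ k ih => rw [htsucc, List.length_append, ih]; simp [Nat.add_assoc]
    have hmono : ∀ j k, j ≤ k → t j <+: t k := by
      intro j k h
      induction h with
      | refl => exact List.prefix_rfl
      | step h ih => exact ih.trans (htsucc _ ▸ List.prefix_append _ _)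
    -- the path
    let ω : ℕ → X := fun n => (t (n + 1)).getD n (Classical.arbitrary X)
    have hωn : ∀ m n, (hn : n < (t m).length) → ω n = (t m)[n] := by
      intro m n hn
      have hn1 : n < (t (n + 1)).length := by have := hlen (n+1); omega
      show (t (n+1)).getD n _ = _
      rw [List.getD_eq_getElem _ _ hn1]
      rcases le_total (n + 1) m with h | h
      · exact (hmono _ _ h).getElem hn1
      · exact ((hmono _ _ h).getElem hn).symm
    have hseg : ∀ m n, n ≤ (t m).length → seg ω n = (t m).take n := by
      intro m n hn
      apply List.ext_getElem
      · simp [seg, hn]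
      · intro i h1 h2
        have hi : i < n := by simpa [seg] using h1
        have him : i < (t m).length := lt_of_lt_of_le hi hn
        simp only [seg, List.getElem_ofFn, List.getElem_take]
        exact hωn m i him
    have hωcyl : ω ∈ cyl s := by
      show seg ω s.length = s
      have := hseg 0 s.length (by have := hlen 0; omega)
      simpa [show t 0 = s from rfl] using this
    have hanti : ∀ k, M (t k) ≤ M s := by
      intro k
      induction k with
      | zero => exact le_rfl
      | succ k ih => exact le_trans (htsucc k ▸ hg (t k)) ih
    have hls : Filter.limsup (fun n => M (seg ω n)) atTop ≤ M s := by
      apply Filter.limsup_le_of_le (by isBoundedDefault)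
      filter_upwards [eventually_ge_atTop s.length] with n hn
      have hk : n = s.length + (n - s.length) := by omega
      have hlen' : n = (t (n - s.length)).length := by have := hlen (n - s.length); omega
      have : seg ω n = t (n - s.length) := by
        rw [hseg (n - s.length) n (le_of_eq hlen')]
        exact List.take_of_length_le (le_of_eq hlen'.symm)
      rw [this]
      exact hanti _
    exact le_trans (iInf₂_le ω hωcyl) hls
  · exact iInf_mono fun ω => iInf_mono fun _ => Filter.liminf_le_limsup
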